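/- arXiv:1402.6918 — 3 statements merged into one kernel-verified Lean document; each statement's English description precedes it below -/
import Mathlib

section
/- Suppose K = G ⋈ H is an internal Zappa–Szép product of monoids and the submonoids act on each other by bijections. Then for all g ∈ G and h ∈ H: h ◁ (h⁻¹ ▷ g) = g⁻¹ ▶ h; (h ◁ g⁻¹) ▷ g = g ◀ h⁻¹; g ◀ (g⁻¹ ▶ h) = h⁻¹ ▷ g; and (g ◀ h⁻¹) ▶ h = h ◁ g⁻¹. -/
namespace ZSPaper

/-- Internal Zappa–Szép product: every element of `K` has a unique `GH`-decomposition
and a unique `HG`-decomposition. -/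
structure ZS (K : Type*) [Monoid K] (G H : Submonoid K) : Prop where
  exGH : ∀ k : K, ∃! p : G × H, (p.1 : K) * (p.2 : K) = k
  exHG : ∀ k : K, ∃! p : H × G, (p.1 : K) * (p.2 : K) = k

variable {K : Type*} [Monoid K] {G H : Submonoid K}

/-- `h ▷ g`, defined by `h * g = (h ▷ g) * (h ◁ g)`. -/
noncomputable def ZS.rtr (zs : ZS K G H) (h : H) (g : G) : G :=
  ((zs.exGH ((h : K) * (g : K))).choose).1

/-- `h ◁ g`, defined by `h * g = (h ▷ g) * (h ◁ g)`. -/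
noncomputable def ZS.rtl (zs : ZS K G H) (h : H) (g : G) : H :=
  ((zs.exGH ((h : K) * (g : K))).choose).2

/-- `g ▶ h`, defined by `g * h = (g ▶ h) * (g ◀ h)`. -/
noncomputable def ZS.ltr (zs : ZS K G H) (g : G) (h : H) : H :=
  ((zs.exHG ((g : K) * (h : K))).choose).1

/-- `g ◀ h`, defined by `g * h = (g ▶ h) * (g ◀ h)`. -/
noncomputable def ZS.ltl (zs : ZS K G H) (g : G) (h : H) : G :=
  ((zs.exHG ((g : K) * (h : K))).choose).2

/-- Right divisibility: `x` is a suffix of `y`. -/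
def RDvd {M : Type*} [Monoid M] (x y : M) : Prop := ∃ u, y = u * x

/-- An atom of a monoid. -/
def MAtom {M : Type*} [Monoid M] (a : M) : Prop :=
  a ≠ 1 ∧ ∀ u v : M, a = u * v → u = 1 ∨ v = 1

/-- An atomic monoid: generated by its atoms, with bounded lengths of atomic
decompositions. -/
def Atomic (M : Type*) [Monoid M] : Prop :=
  (∀ x : M, ∃ l : List M, (∀ a ∈ l, MAtom a) ∧ l.prod = x) ∧
  ∀ x : M, ∃ N : ℕ, ∀ l : List M, (∀ a ∈ l, MAtom a) → l.prod = x → l.length ≤ N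

/-- `m` is the least common upper bound of the set `S` with respect to
left divisibility. -/
def IsDvdLUB {M : Type*} [Monoid M] (S : Set M) (m : M) : Prop :=
  (∀ s ∈ S, s ∣ m) ∧ ∀ n, (∀ s ∈ S, s ∣ n) → m ∣ n

/-- `m` is the least common upper bound of `x` and `y` with respect to left
divisibility. -/
def IsDvdLCM {M : Type*} [Monoid M] (x y m : M) : Prop :=
  x ∣ m ∧ y ∣ m ∧ ∀ n, x ∣ n → y ∣ n → m ∣ n

/-- `d = Δ_x`, the least common upper bound of `{ y \ x : y ∈ M }`, where
`y * (y \ x) = y ∨ x`. -/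
def IsDeltaOf {M : Type*} [Monoid M] (x d : M) : Prop :=
  IsDvdLUB {t : M | ∃ y, IsDvdLCM y x (y * t)} d

/-- A Garside structure on a monoid `M` with Garside element `Δ`. -/
structure GarsideStructure (M : Type*) [Monoid M] (Δ : M) : Prop where
  mul_left_cancel : ∀ a b c : M, a * b = a * c → b = c
  mul_right_cancel : ∀ a b c : M, b * a = c * a → b = c
  atomic : Atomic M
  meet_left : ∀ x y : M, ∃ d, d ∣ x ∧ d ∣ y ∧ ∀ e, e ∣ x → e ∣ y → e ∣ d
  join_left : ∀ x y : M, ∃ m, x ∣ m ∧ y ∣ m ∧ ∀ n, x ∣ n → y ∣ n → m ∣ n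
  meet_right : ∀ x y : M, ∃ d, RDvd d x ∧ RDvd d y ∧ ∀ e, RDvd e x → RDvd e y → RDvd e d
  join_right : ∀ x y : M, ∃ m, RDvd x m ∧ RDvd y m ∧ ∀ n, RDvd x n → RDvd y n → RDvd m n
  balanced : ∀ x, x ∣ Δ ↔ RDvd x Δ
  div_finite : {x : M | x ∣ Δ}.Finite
  div_gen : Submonoid.closure {x : M | x ∣ Δ} = ⊤

end ZSPaper

open ZSPaper Function

section Aux
variable {K : Type*} [Monoid K] {G H : Submonoid K}

lemma ZSPaper.ZS.rtr_rtl_spec (zs : ZS K G H) (h : H) (g : G) :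
    (zs.rtr h g : K) * (zs.rtl h g : K) = (h : K) * g :=
  (zs.exGH ((h : K) * g)).choose_spec.1

lemma ZSPaper.ZS.ltr_ltl_spec (zs : ZS K G H) (g : G) (h : H) :
    (zs.ltr g h : K) * (zs.ltl g h : K) = (g : K) * h :=
  (zs.exHG ((g : K) * h)).choose_spec.1

lemma ZSPaper.ZS.gh_unique (zs : ZS K G H) (h : H) (g : G) (g' : G) (h' : H)
    (e : (g' : K) * h' = (h : K) * g) :
    g' = zs.rtr h g ∧ h' = zs.rtl h g := by
  have := (zs.exGH ((h : K) * g)).choose_spec.2 (g', h') e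
  exact ⟨congrArg Prod.fst this, congrArg Prod.snd this⟩

lemma ZSPaper.ZS.hg_unique (zs : ZS K G H) (g : G) (h : H) (h' : H) (g' : G)
    (e : (h' : K) * g' = (g : K) * h) :
    h' = zs.ltr g h ∧ g' = zs.ltl g h := by
  have := (zs.exHG ((g : K) * h)).choose_spec.2 (h', g') e
  exact ⟨congrArg Prod.fst this, congrArg Prod.snd this⟩

end Aux

theorem stmt10 {K : Type*} [Monoid K] {G H : Submonoid K} (zs : ZS K G H)
    (hb₁ : ∀ h : H, Function.Bijective (zs.rtr h))
    (hb₂ : ∀ h : H, Function.Bijective (fun g : G => zs.ltl g h))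
    (hb₃ : ∀ g : G, Function.Bijective (fun h : H => zs.rtl h g))
    (hb₄ : ∀ g : G, Function.Bijective (zs.ltr g)) :
    ∀ (g : G) (h : H),
      zs.rtl h (invFun (zs.rtr h) g) = invFun (zs.ltr g) h ∧
      zs.rtr (invFun (fun h' : H => zs.rtl h' g) h) g
        = invFun (fun g' : G => zs.ltl g' h) g ∧
      zs.ltl g (invFun (zs.ltr g) h) = invFun (zs.rtr h) g ∧
      zs.ltr (invFun (fun g' : G => zs.ltl g' h) g) h
        = invFun (fun h' : H => zs.rtl h' g) h := by
  intro g h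
  -- first and third identities
  set g₀ := invFun (zs.rtr h) g with hg₀
  have hrg₀ : zs.rtr h g₀ = g := invFun_eq ((hb₁ h).surjective g)
  have e1 : ((zs.ltr g (zs.rtl h g₀) : K)) * (zs.ltl g (zs.rtl h g₀) : K)
      = (h : K) * g₀ := by
    rw [ZSPaper.ZS.ltr_ltl_spec zs]
    have := ZSPaper.ZS.rtr_rtl_spec zs h g₀
    rw [hrg₀] at this
    exact this
  have u1 := ZSPaper.ZS.gh_unique zs h g₀ g (zs.rtl h g₀) (by
    have := ZSPaper.ZS.rtr_rtl_spec zs h g₀; rw [hrg₀] at this; exact this)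
  -- compute ltr g (rtl h g₀) and ltl g (rtl h g₀)
  have e1' : ((h : H) : K) * (g₀ : K) = (g : K) * (zs.rtl h g₀ : K) := by
    have := ZSPaper.ZS.rtr_rtl_spec zs h g₀; rw [hrg₀] at this; exact this.symm
  obtain ⟨hu1, hu2⟩ := ZSPaper.ZS.hg_unique zs g (zs.rtl h g₀) h g₀ e1'
  have id1 : zs.rtl h g₀ = invFun (zs.ltr g) h := by
    apply (hb₄ g).injective
    rw [← hu1, invFun_eq ((hb₄ g).surjective h)]
  have id3 : zs.ltl g (invFun (zs.ltr g) h) = g₀ := by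
    rw [← id1]; exact hu2.symm
  -- second and fourth identities
  set h₁ := invFun (fun h' : H => zs.rtl h' g) h with hh₁
  have hrh₁ : zs.rtl h₁ g = h := invFun_eq ((hb₃ g).surjective h)
  have e2 : ((zs.rtr h₁ g : K)) * (h : K) = (h₁ : K) * g := by
    have := ZSPaper.ZS.rtr_rtl_spec zs h₁ g; rw [hrh₁] at this; exact this
  obtain ⟨hu3, hu4⟩ := ZSPaper.ZS.hg_unique zs (zs.rtr h₁ g) h h₁ g e2.symm
  have id2 : zs.rtr h₁ g = invFun (fun g' : G => zs.ltl g' h) g := by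
    apply (hb₂ h).injective
    show zs.ltl (zs.rtr h₁ g) h = zs.ltl (invFun (fun g' : G => zs.ltl g' h) g) h
    have : zs.ltl (invFun (fun g' : G => zs.ltl g' h) g) h = g :=
      invFun_eq ((hb₂ h).surjective g)
    rw [this, ← hu4]
  have id4 : zs.ltr (invFun (fun g' : G => zs.ltl g' h) g) h = h₁ := by
    rw [← id2, ← hu3]
  exact ⟨id1, id2, id3, id4⟩
end

section
/- Suppose K = G ⋈ H is an internal Zappa–Szép product of monoids where the submonoids act on each other by bijections. Then for all g, g₁, g₂ ∈ G and h ∈ H: h⁻¹ ▷ (g₁g₂) = (h⁻¹ ▷ g₁)((g₁⁻¹ ▶ h)⁻¹ ▷ g₂) and (g₁g₂) ◀ h⁻¹ = (g₁ ◀ (h ◁ g₂⁻¹)⁻¹)(g₂ ◀ h⁻¹). -/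
namespace ZSPaper

variable {K : Type*} [Monoid K] {G H : Submonoid K}

theorem ZS.rtr_rtl_spec_s11 (zs : ZS K G H) (h : H) (g : G) :
    (zs.rtr h g : K) * (zs.rtl h g : K) = (h : K) * g :=
  (zs.exGH ((h : K) * g)).choose_spec.1

theorem ZS.ltr_ltl_spec_s11 (zs : ZS K G H) (g : G) (h : H) :
    (zs.ltr g h : K) * (zs.ltl g h : K) = (g : K) * h :=
  (zs.exHG ((g : K) * h)).choose_spec.1

theorem ZS.gh_unique_s11 (zs : ZS K G H) {h h' : H} {g g' : G}
    (e : (g' : K) * (h' : K) = (h : K) * g) :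
    zs.rtr h g = g' ∧ zs.rtl h g = h' := by
  have h1 := (zs.exGH ((h : K) * g)).choose_spec.2 (g', h') e
  exact ⟨(congrArg Prod.fst h1).symm, (congrArg Prod.snd h1).symm⟩

theorem ZS.hg_unique_s11 (zs : ZS K G H) {h h' : H} {g g' : G}
    (e : (h' : K) * (g' : K) = (g : K) * h) :
    zs.ltr g h = h' ∧ zs.ltl g h = g' := by
  have h1 := (zs.exHG ((g : K) * h)).choose_spec.2 (h', g') e
  exact ⟨(congrArg Prod.fst h1).symm, (congrArg Prod.snd h1).symm⟩

theorem ZS.rtr_mul (zs : ZS K G H) (h : H) (g₁ g₂ : G) :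
    zs.rtr h (g₁ * g₂) = zs.rtr h g₁ * zs.rtr (zs.rtl h g₁) g₂ ∧
    zs.rtl h (g₁ * g₂) = zs.rtl (zs.rtl h g₁) g₂ := by
  apply zs.gh_unique_s11
  push_cast
  rw [mul_assoc, zs.rtr_rtl_spec_s11, ← mul_assoc, zs.rtr_rtl_spec_s11, mul_assoc]

theorem ZS.ltl_mul (zs : ZS K G H) (h : H) (g₁ g₂ : G) :
    zs.ltl (g₁ * g₂) h = zs.ltl g₁ (zs.ltr g₂ h) * zs.ltl g₂ h ∧
    zs.ltr (g₁ * g₂) h = zs.ltr g₁ (zs.ltr g₂ h) := by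
  have := zs.hg_unique_s11 (h := h) (g := g₁ * g₂)
    (h' := zs.ltr g₁ (zs.ltr g₂ h)) (g' := zs.ltl g₁ (zs.ltr g₂ h) * zs.ltl g₂ h) ?_
  · exact ⟨this.2, this.1⟩
  · push_cast
    rw [← mul_assoc, zs.ltr_ltl_spec_s11, mul_assoc, zs.ltr_ltl_spec_s11, mul_assoc]

theorem ZS.ltr_rtr (zs : ZS K G H) (h : H) (g : G) :
    zs.ltr (zs.rtr h g) (zs.rtl h g) = h ∧ zs.ltl (zs.rtr h g) (zs.rtl h g) = g :=
  zs.hg_unique_s11 (zs.rtr_rtl_spec_s11 h g).symm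

theorem ZS.rtr_ltr (zs : ZS K G H) (g : G) (h : H) :
    zs.rtr (zs.ltr g h) (zs.ltl g h) = g ∧ zs.rtl (zs.ltr g h) (zs.ltl g h) = h :=
  zs.gh_unique_s11 (zs.ltr_ltl_spec_s11 g h).symm

end ZSPaper

open ZSPaper Function

theorem stmt11 {K : Type*} [Monoid K] {G H : Submonoid K} (zs : ZS K G H)
    (hb₁ : ∀ h : H, Function.Bijective (zs.rtr h))
    (hb₂ : ∀ h : H, Function.Bijective (fun g : G => zs.ltl g h))
    (hb₃ : ∀ g : G, Function.Bijective (fun h : H => zs.rtl h g))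
    (hb₄ : ∀ g : G, Function.Bijective (zs.ltr g)) :
    ∀ (g₁ g₂ : G) (h : H),
      invFun (zs.rtr h) (g₁ * g₂)
        = invFun (zs.rtr h) g₁ *
          invFun (zs.rtr (invFun (zs.ltr g₁) h)) g₂ ∧
      invFun (fun g : G => zs.ltl g h) (g₁ * g₂)
        = invFun (fun g : G => zs.ltl g (invFun (fun h' : H => zs.rtl h' g₂) h)) g₁ *
          invFun (fun g : G => zs.ltl g h) g₂ := by
  intro g₁ g₂ h
  constructor
  · set a := invFun (zs.rtr h) g₁ with ha
    set b := invFun (zs.rtr (invFun (zs.ltr g₁) h)) g₂ with hbdef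
    have hA : zs.rtr h a = g₁ := rightInverse_invFun (hb₁ h).2 g₁
    have hH' : invFun (zs.ltr g₁) h = zs.rtl h a := by
      have h1 := (zs.ltr_rtr h a).1
      rw [hA] at h1
      conv_lhs => rw [← h1]
      exact leftInverse_invFun (hb₄ g₁).1 _
    have hB : zs.rtr (invFun (zs.ltr g₁) h) b = g₂ :=
      rightInverse_invFun (hb₁ _).2 g₂
    have key : zs.rtr h (a * b) = g₁ * g₂ := by
      rw [(zs.rtr_mul h a b).1, hA, ← hH', hB]
    rw [← key]
    exact leftInverse_invFun (hb₁ h).1 _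
  · set b := invFun (fun g : G => zs.ltl g h) g₂ with hbdef
    set a := invFun (fun g : G => zs.ltl g (invFun (fun h' : H => zs.rtl h' g₂) h)) g₁ with hadef
    have hB : zs.ltl b h = g₂ := rightInverse_invFun (hb₂ h).2 g₂
    have hH' : invFun (fun h' : H => zs.rtl h' g₂) h = zs.ltr b h := by
      have h1 := (zs.rtr_ltr b h).2
      rw [hB] at h1
      conv_lhs => rw [← h1]
      exact leftInverse_invFun (hb₃ g₂).1 _
    have hA : zs.ltl a (zs.ltr b h) = g₁ := by
      rw [← hH']
      exact rightInverse_invFun (hb₂ _).2 g₁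
    have key : zs.ltl (a * b) h = g₁ * g₂ := by
      rw [(zs.ltl_mul h a b).1, hA, hB]
    rw [← key]
    exact leftInverse_invFun (hb₂ h).1 _
end

section
/- Suppose K = G ⋈ H is an internal Zappa–Szép product where G and H are cancellative and conical monoids acting on each other by bijections. Then the map G × H → K given by (g, h) ↦ g ∨ h is a poset isomorphism from (G, ≼_G) × (H, ≼_H) to (K, ≼_K). -/
open ZSPaper Function

section zshelpers

variable {K : Type*} [Monoid K] {G H : Submonoid K}

lemma zs_ltr_spec (zs : ZS K G H) (g : G) (h : H) :
    ((zs.ltr g h : H) : K) * ((zs.ltl g h : G) : K) = (g : K) * (h : K) :=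
  (zs.exHG ((g : K) * (h : K))).choose_spec.1

lemma zs_rtr_spec (zs : ZS K G H) (h : H) (g : G) :
    ((zs.rtr h g : G) : K) * ((zs.rtl h g : H) : K) = (h : K) * (g : K) :=
  (zs.exGH ((h : K) * (g : K))).choose_spec.1

lemma zs_hg_unique (zs : ZS K G H) {h₁ h₂ : H} {g₁ g₂ : G}
    (e : (h₁ : K) * (g₁ : K) = (h₂ : K) * (g₂ : K)) : h₁ = h₂ ∧ g₁ = g₂ := by
  have := (zs.exHG ((h₂ : K) * (g₂ : K))).unique (y₁ := (h₁, g₁)) (y₂ := (h₂, g₂)) e rfl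
  exact ⟨congrArg Prod.fst this, congrArg Prod.snd this⟩

lemma zs_gh_unique (zs : ZS K G H) {g₁ g₂ : G} {h₁ h₂ : H}
    (e : (g₁ : K) * (h₁ : K) = (g₂ : K) * (h₂ : K)) : g₁ = g₂ ∧ h₁ = h₂ := by
  have := (zs.exGH ((g₂ : K) * (h₂ : K))).unique (y₁ := (g₁, h₁)) (y₂ := (g₂, h₂)) e rfl
  exact ⟨congrArg Prod.fst this, congrArg Prod.snd this⟩

end zshelpers

theorem stmt15 {K : Type*} [Monoid K] {G H : Submonoid K} (zs : ZS K G H)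
    (hGl : ∀ a b c : G, a * b = a * c → b = c)
    (hGr : ∀ a b c : G, b * a = c * a → b = c)
    (hHl : ∀ a b c : H, a * b = a * c → b = c)
    (hHr : ∀ a b c : H, b * a = c * a → b = c)
    (hGcon : ∀ a b : G, a * b = 1 → a = 1 ∧ b = 1)
    (hHcon : ∀ a b : H, a * b = 1 → a = 1 ∧ b = 1)
    (hb₁ : ∀ h : H, Function.Bijective (zs.rtr h))
    (hb₂ : ∀ h : H, Function.Bijective (fun g : G => zs.ltl g h))
    (hb₃ : ∀ g : G, Function.Bijective (fun h : H => zs.rtl h g))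
    (hb₄ : ∀ g : G, Function.Bijective (zs.ltr g)) :
    Function.Bijective
      (fun p : G × H => (p.1 : K) * ((invFun (zs.ltr p.1) p.2 : H) : K)) ∧
    ∀ p q : G × H,
      (p.1 ∣ q.1 ∧ p.2 ∣ q.2) ↔
        ((p.1 : K) * ((invFun (zs.ltr p.1) p.2 : H) : K)) ∣
          ((q.1 : K) * ((invFun (zs.ltr q.1) q.2 : H) : K)) := by
  have hinv : ∀ (g : G) (p : H), invFun (zs.ltr g) (zs.ltr g p) = p :=
    fun g p => Function.leftInverse_invFun (hb₄ g).1 p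
  have hsurj : ∀ (g : G) (h : H), zs.ltr g (invFun (zs.ltr g) h) = h :=
    fun g h => Function.rightInverse_invFun (hb₄ g).2 h
  -- the step lemmas for the forward direction of the order statement
  have stepA : ∀ (g a : G) (h : H),
      ((g : K) * ((invFun (zs.ltr g) h : H) : K)) ∣
        (((g * a : G) : K) * ((invFun (zs.ltr (g * a)) h : H) : K)) := by
    intro g a h
    set p₂ : H := invFun (zs.ltr (g * a)) h with hp₂def
    have hp₂ : zs.ltr (g * a) p₂ = h := hsurj _ _
    set x : H := zs.ltr a p₂ with hxdef
    have key : zs.ltr g x = h := by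
      have e : ((zs.ltr g x : H) : K) * ((zs.ltl g x * zs.ltl a p₂ : G) : K)
          = (h : K) * ((zs.ltl (g * a) p₂ : G) : K) := by
        push_cast
        calc ((zs.ltr g x : H) : K) * (((zs.ltl g x : G) : K) * ((zs.ltl a p₂ : G) : K))
            = (((zs.ltr g x : H) : K) * ((zs.ltl g x : G) : K)) * ((zs.ltl a p₂ : G) : K) := by
              rw [mul_assoc]
          _ = ((g : K) * (x : K)) * ((zs.ltl a p₂ : G) : K) := by rw [zs_ltr_spec]
          _ = (g : K) * (((x : K) * ((zs.ltl a p₂ : G) : K))) := by rw [mul_assoc]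
          _ = (g : K) * ((a : K) * (p₂ : K)) := by rw [zs_ltr_spec]
          _ = ((g * a : G) : K) * (p₂ : K) := by push_cast; rw [mul_assoc]
          _ = ((zs.ltr (g * a) p₂ : H) : K) * ((zs.ltl (g * a) p₂ : G) : K) := by
              rw [zs_ltr_spec]
          _ = (h : K) * ((zs.ltl (g * a) p₂ : G) : K) := by rw [hp₂]
      exact (zs_hg_unique zs e).1
    have hfix : invFun (zs.ltr g) h = x := by rw [← key, hinv]
    refine ⟨((zs.ltl a p₂ : G) : K), ?_⟩
    rw [hfix]
    calc ((g * a : G) : K) * (p₂ : K)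
        = (g : K) * ((a : K) * (p₂ : K)) := by push_cast; rw [mul_assoc]
      _ = (g : K) * ((x : K) * ((zs.ltl a p₂ : G) : K)) := by rw [zs_ltr_spec]
      _ = (g : K) * (x : K) * ((zs.ltl a p₂ : G) : K) := by rw [mul_assoc]
  have stepB : ∀ (g : G) (h b : H),
      ((g : K) * ((invFun (zs.ltr g) h : H) : K)) ∣
        ((g : K) * ((invFun (zs.ltr g) (h * b) : H) : K)) := by
    intro g h b
    set p₁ : H := invFun (zs.ltr g) h with hp₁def
    have hp₁ : zs.ltr g p₁ = h := hsurj _ _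
    set c : G := zs.ltl g p₁ with hcdef
    set q : H := invFun (zs.ltr c) b with hqdef
    have hq : zs.ltr c q = b := hsurj _ _
    have key : zs.ltr g (p₁ * q) = h * b := by
      have e : ((zs.ltr g (p₁ * q) : H) : K) * ((zs.ltl g (p₁ * q) : G) : K)
          = ((h * b : H) : K) * ((zs.ltl c q : G) : K) := by
        calc ((zs.ltr g (p₁ * q) : H) : K) * ((zs.ltl g (p₁ * q) : G) : K)
            = (g : K) * ((p₁ * q : H) : K) := zs_ltr_spec zs g (p₁ * q)
          _ = ((g : K) * (p₁ : K)) * (q : K) := by push_cast; rw [mul_assoc]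
          _ = (((zs.ltr g p₁ : H) : K) * ((c : G) : K)) * (q : K) := by rw [zs_ltr_spec]
          _ = ((h : K) * ((c : G) : K)) * (q : K) := by rw [hp₁]
          _ = (h : K) * (((c : G) : K) * (q : K)) := by rw [mul_assoc]
          _ = (h : K) * (((zs.ltr c q : H) : K) * ((zs.ltl c q : G) : K)) := by
              rw [zs_ltr_spec]
          _ = (h : K) * ((b : K) * ((zs.ltl c q : G) : K)) := by rw [hq]
          _ = ((h * b : H) : K) * ((zs.ltl c q : G) : K) := by push_cast; rw [mul_assoc]
      exact (zs_hg_unique zs e).1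
    have hfix : invFun (zs.ltr g) (h * b) = p₁ * q := by rw [← key, hinv]
    refine ⟨((q : H) : K), ?_⟩
    rw [hfix]
    push_cast
    rw [mul_assoc]
  constructor
  · constructor
    · rintro ⟨g₁, h₁⟩ ⟨g₂, h₂⟩ e
      dsimp only at e
      obtain ⟨e1, e2⟩ := zs_gh_unique zs e
      subst e1
      have : h₁ = h₂ := by
        rw [← hsurj g₁ h₁, e2, hsurj]
      rw [this]
    · intro k
      obtain ⟨⟨g, p⟩, hk, -⟩ := zs.exGH k
      refine ⟨(g, zs.ltr g p), ?_⟩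
      dsimp only
      rw [hinv]
      exact hk
  · intro p q
    constructor
    · rintro ⟨⟨a, ha⟩, ⟨b, hb⟩⟩
      have d1 : ((p.1 : K) * ((invFun (zs.ltr p.1) p.2 : H) : K)) ∣
          ((q.1 : K) * ((invFun (zs.ltr q.1) p.2 : H) : K)) := by
        rw [ha]; exact stepA p.1 a p.2
      have d2 : ((q.1 : K) * ((invFun (zs.ltr q.1) p.2 : H) : K)) ∣
          ((q.1 : K) * ((invFun (zs.ltr q.1) q.2 : H) : K)) := by
        rw [hb]; exact stepB q.1 p.2 b
      exact d1.trans d2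
    · rintro ⟨u, hu⟩
      set p₁ : H := invFun (zs.ltr p.1) p.2 with hp₁def
      set p₂ : H := invFun (zs.ltr q.1) q.2 with hp₂def
      have hp₁ : zs.ltr p.1 p₁ = p.2 := hsurj _ _
      have hp₂' : zs.ltr q.1 p₂ = q.2 := hsurj _ _
      constructor
      · -- G-component
        obtain ⟨⟨gu, hu'⟩, su, -⟩ := zs.exGH u
        have e : (q.1 : K) * (p₂ : K)
            = ((p.1 * zs.rtr p₁ gu : G) : K) * ((zs.rtl p₁ gu * hu' : H) : K) := by
          calc (q.1 : K) * (p₂ : K)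
              = (p.1 : K) * (p₁ : K) * u := hu
            _ = (p.1 : K) * (p₁ : K) * ((gu : K) * (hu' : K)) := by rw [su]
            _ = (p.1 : K) * (((p₁ : K) * (gu : K)) * (hu' : K)) := by
                rw [mul_assoc, mul_assoc]
            _ = (p.1 : K) * ((((zs.rtr p₁ gu : G) : K) * ((zs.rtl p₁ gu : H) : K))
                  * (hu' : K)) := by rw [zs_rtr_spec]
            _ = ((p.1 * zs.rtr p₁ gu : G) : K) * ((zs.rtl p₁ gu * hu' : H) : K) := by
                push_cast; rw [mul_assoc, mul_assoc]
        exact ⟨zs.rtr p₁ gu, (zs_gh_unique zs e).1⟩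
      · -- H-component
        set c₁ : G := zs.ltl p.1 p₁ with hc₁def
        set c₂ : G := zs.ltl q.1 p₂ with hc₂def
        have hΦp : (p.1 : K) * (p₁ : K) = (p.2 : K) * ((c₁ : G) : K) := by
          rw [← hp₁, hc₁def, zs_ltr_spec]
        have hΦq : (q.1 : K) * (p₂ : K) = (q.2 : K) * ((c₂ : G) : K) := by
          rw [← hp₂', hc₂def, zs_ltr_spec]
        obtain ⟨⟨hu₂, gu₂⟩, su, -⟩ := zs.exHG u
        have e : (q.2 : K) * ((c₂ : G) : K)
            = ((p.2 * zs.ltr c₁ hu₂ : H) : K) * ((zs.ltl c₁ hu₂ * gu₂ : G) : K) := by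
          calc (q.2 : K) * ((c₂ : G) : K)
              = (p.1 : K) * (p₁ : K) * u := by rw [← hΦq]; exact hu
            _ = (p.2 : K) * ((c₁ : G) : K) * ((hu₂ : K) * (gu₂ : K)) := by
                rw [hΦp, su]
            _ = (p.2 : K) * ((((c₁ : G) : K) * (hu₂ : K)) * (gu₂ : K)) := by
                rw [mul_assoc, mul_assoc]
            _ = (p.2 : K) * ((((zs.ltr c₁ hu₂ : H) : K) * ((zs.ltl c₁ hu₂ : G) : K))
                  * (gu₂ : K)) := by rw [zs_ltr_spec]
            _ = ((p.2 * zs.ltr c₁ hu₂ : H) : K) * ((zs.ltl c₁ hu₂ * gu₂ : G) : K) := by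
                push_cast; rw [mul_assoc, mul_assoc]
        exact ⟨zs.ltr c₁ hu₂, (zs_hg_unique zs e).1⟩
end
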